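/- Let G be a finite simple graph in which every vertex has degree at least δ, where δ ≥ 1, let J be a δ-regular spanning subgraph of G with h edges, and let uv be an edge of J. Writing Δ(u) = deg_G(u) − δ, the probability that J ⊆ G_ω, e_{k(ω)} = uv, and u has degree exactly δ in G_ω equals (h−1)! · Δ(u)! / (h + Δ(u))!, which equals (1/h) · 1/binom(h+Δ(u), h). -/

import Mathlib

open Finset

/-- The degree of a vertex `v` in the graph whose edge set is the finite set `s`
of edges (elements of `Sym2 V`). -/
def degIn {V : Type*} [DecidableEq V] (s : Finset (Sym2 V)) (v : V) : ℕ :=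
  (s.filter (fun e => v ∈ e)).card

/-- Given an ordering `ω` of a finite set `s` of edges, the set consisting of the
first `i` edges `e_{ω(1)}, …, e_{ω(i)}`. -/
def prefixEdges {V : Type*} [DecidableEq V] {s : Finset (Sym2 V)}
    (ω : Fin s.card ≃ {e : Sym2 V // e ∈ s}) (i : ℕ) : Finset (Sym2 V) :=
  (Finset.univ.filter (fun j : Fin s.card => (j : ℕ) < i)).image (fun j => (ω j : Sym2 V))

/-- `k(ω)`: the least `i` such that every vertex has degree at least `δ` in the graph
formed by the first `i` edges of the ordering `ω`. -/
noncomputable def stopIndex {V : Type*} [Fintype V] [DecidableEq V] (δ : ℕ)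
    {s : Finset (Sym2 V)} (ω : Fin s.card ≃ {e : Sym2 V // e ∈ s}) : ℕ :=
  sInf {i | ∀ v : V, δ ≤ degIn (prefixEdges ω i) v}

/-- The edge set of `G_ω`, i.e. the first `k(ω)` edges of the ordering `ω`. -/
noncomputable def finalEdges {V : Type*} [Fintype V] [DecidableEq V] (δ : ℕ)
    {s : Finset (Sym2 V)} (ω : Fin s.card ≃ {e : Sym2 V // e ∈ s}) : Finset (Sym2 V) :=
  prefixEdges ω (stopIndex δ ω)

/-- A graph is `δ`-regular: every vertex has exactly `δ` neighbours. -/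
def regOfDegree {V : Type*} (J : SimpleGraph V) (δ : ℕ) : Prop :=
  ∀ v : V, (J.neighborSet v).ncard = δ

/-- `e` is the last edge `e_{k(ω)}` of `G_ω`: it belongs to the first `k(ω)` edges but
not to the first `k(ω) − 1` edges. -/
noncomputable def lastEdgeIs {V : Type*} [Fintype V] [DecidableEq V] (δ : ℕ)
    {s : Finset (Sym2 V)} (ω : Fin s.card ≃ {e : Sym2 V // e ∈ s}) (e : Sym2 V) : Prop :=
  e ∈ prefixEdges ω (stopIndex δ ω) ∧ e ∉ prefixEdges ω (stopIndex δ ω - 1)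


section Counting
variable {γ : Type*} [Fintype γ] [DecidableEq γ]

omit [Fintype γ] [DecidableEq γ] in
lemma rank_lower {n : ℕ} (g : γ ≃ Fin n) (B : Finset γ) (x : γ)
    (hB : ∀ b ∈ B, g b < g x) : B.card ≤ (g x : ℕ) := by
  have h1 : B.image g ⊆ Finset.Iio (g x) := by
    intro i hi; simp only [mem_image] at hi; obtain ⟨b, hb, rfl⟩ := hi
    simpa using hB b hb
  have := Finset.card_le_card h1
  rwa [Finset.card_image_of_injective _ g.injective, Fin.card_Iio] at this

omit [Fintype γ] [DecidableEq γ] in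
lemma rank_upper {n : ℕ} (g : γ ≃ Fin n) (C : Finset γ) (x : γ)
    (hC : ∀ c ∈ C, g x < g c) : C.card ≤ n - 1 - (g x : ℕ) := by
  have h1 : C.image g ⊆ Finset.Ioi (g x) := by
    intro i hi; simp only [mem_image] at hi; obtain ⟨b, hb, rfl⟩ := hi
    simpa using hC b hb
  have := Finset.card_le_card h1
  rwa [Finset.card_image_of_injective _ g.injective, Fin.card_Ioi] at this

lemma card_univ_partition (B C : Finset γ) (x : γ) (hxB : x ∉ B) (hxC : x ∉ C)
    (hBC : Disjoint B C) (hcov : ∀ y : γ, y = x ∨ y ∈ B ∨ y ∈ C) :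
    Fintype.card γ = B.card + 1 + C.card := by
  have : (univ : Finset γ) = insert x (B ∪ C) := by
    ext y; simp only [mem_univ, true_iff, mem_insert, mem_union]; exact hcov y
  rw [← Finset.card_univ, this, Finset.card_insert_of_notMem (by simp [hxB, hxC]),
    Finset.card_union_of_disjoint hBC]
  omega

lemma fav_rank_eq {n : ℕ} (B C : Finset γ) (x : γ) (hxB : x ∉ B) (hxC : x ∉ C)
    (hBC : Disjoint B C) (hcov : ∀ y : γ, y = x ∨ y ∈ B ∨ y ∈ C)
    (hn : Fintype.card γ = n) (g : γ ≃ Fin n)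
    (hB : ∀ b ∈ B, g b < g x) (hC : ∀ c ∈ C, g x < g c) : (g x : ℕ) = B.card := by
  have h1 := rank_lower g B x hB
  have h2 := rank_upper g C x hC
  have h3 := card_univ_partition B C x hxB hxC hBC hcov
  have h4 : (g x : ℕ) < n := (g x).isLt
  omega

/-- Base case: number of favorable bijections when `B`, `{x}`, `C` partition `γ`. -/
lemma card_fav_partition (B C : Finset γ) (x : γ) (hxB : x ∉ B) (hxC : x ∉ C)
    (hBC : Disjoint B C) (hcov : ∀ y : γ, y = x ∨ y ∈ B ∨ y ∈ C) {n : ℕ}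
    (hn : Fintype.card γ = n) :
    (univ.filter fun g : γ ≃ Fin n =>
      (∀ b ∈ B, g b < g x) ∧ ∀ c ∈ C, g x < g c).card
      = B.card.factorial * C.card.factorial := by
  classical
  set b := B.card with hb
  set c := C.card with hc
  have hn' : n = b + 1 + c := by
    rw [← hn, card_univ_partition B C x hxB hxC hBC hcov]
  have hBnotC : ∀ y, y ∈ B → y ∉ C := fun y hy => Finset.disjoint_left.mp hBC hy
  set F : (({y // y ∈ B} ≃ Fin b) × ({y // y ∈ C} ≃ Fin c)) → γ → Fin n :=
    fun p y =>
      if hB' : y ∈ B then ⟨(p.1 ⟨y, hB'⟩ : ℕ), by have := (p.1 ⟨y, hB'⟩).isLt; omega⟩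
      else if hC' : y ∈ C then
        ⟨b + 1 + (p.2 ⟨y, hC'⟩ : ℕ), by have := (p.2 ⟨y, hC'⟩).isLt; omega⟩
      else ⟨b, by omega⟩ with hF
  have hFBval : ∀ p y (h : y ∈ B), (F p y : ℕ) = (p.1 ⟨y, h⟩ : ℕ) := by
    intro p y h; simp only [hF, dif_pos h]
  have hFCval : ∀ p y (h : y ∈ C), (F p y : ℕ) = b + 1 + (p.2 ⟨y, h⟩ : ℕ) := by
    intro p y h; simp only [hF]; rw [dif_neg (fun hyB => hBnotC y hyB h), dif_pos h]
  have hFxval : ∀ p, (F p x : ℕ) = b := by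
    intro p; simp only [hF]; rw [dif_neg hxB, dif_neg hxC]
  have hFinj : ∀ p, Function.Injective (F p) := by
    intro p y1 y2 hy
    have hv : (F p y1 : ℕ) = (F p y2 : ℕ) := by rw [hy]
    rcases hcov y1 with rfl | h1 | h1 <;> rcases hcov y2 with rfl | h2 | h2
    · rfl
    · rw [hFxval, hFBval p y2 h2] at hv; have := (p.1 ⟨y2, h2⟩).isLt; omega
    · rw [hFxval, hFCval p y2 h2] at hv; omega
    · rw [hFxval, hFBval p y1 h1] at hv; have := (p.1 ⟨y1, h1⟩).isLt; omega
    · rw [hFBval p y1 h1, hFBval p y2 h2] at hv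
      have := p.1.injective (Fin.ext hv)
      exact Subtype.ext_iff.mp this
    · rw [hFBval p y1 h1, hFCval p y2 h2] at hv
      have := (p.1 ⟨y1, h1⟩).isLt; omega
    · rw [hFxval, hFCval p y1 h1] at hv; omega
    · rw [hFBval p y2 h2, hFCval p y1 h1] at hv
      have := (p.1 ⟨y2, h2⟩).isLt; omega
    · rw [hFCval p y1 h1, hFCval p y2 h2] at hv
      have := p.2.injective (Fin.ext (by omega : ((p.2 ⟨y1, h1⟩ : ℕ)) = (p.2 ⟨y2, h2⟩ : ℕ)))
      exact Subtype.ext_iff.mp this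
  have hFbij : ∀ p, Function.Bijective (F p) := by
    intro p
    rw [Fintype.bijective_iff_injective_and_card]
    exact ⟨hFinj p, by simp [hn]⟩
  have hrk : ∀ (g : γ ≃ Fin n), (∀ y ∈ B, g y < g x) → (∀ y ∈ C, g x < g y) →
      (g x : ℕ) = b := fun g h1 h2 => fav_rank_eq B C x hxB hxC hBC hcov hn g h1 h2
  set decode : (({y // y ∈ B} ≃ Fin b) × ({y // y ∈ C} ≃ Fin c)) → (γ ≃ Fin n) :=
    fun p => Equiv.ofBijective (F p) (hFbij p) with hdec
  have hdecval : ∀ p y, ((decode p) y : ℕ) = (F p y : ℕ) := fun p y => rfl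
  have hbn : b + 1 ≤ n := by omega
  set ceB : {i : Fin n // (i : ℕ) < b} ≃ Fin b :=
    { toFun := fun i => ⟨i.1, i.2⟩
      invFun := fun j => ⟨⟨j.1, by omega⟩, j.2⟩
      left_inv := fun i => by ext; rfl
      right_inv := fun j => rfl } with hceB
  set ceC : {i : Fin n // b < (i : ℕ)} ≃ Fin c :=
    { toFun := fun i => ⟨i.1 - (b + 1), by have := i.1.isLt; have := i.2; omega⟩
      invFun := fun j => ⟨⟨b + 1 + j.1, by have := j.isLt; omega⟩,
        by show b < b + 1 + (j : ℕ); omega⟩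
      left_inv := fun i => by
        ext
        show b + 1 + ((i.1 : ℕ) - (b + 1)) = (i.1 : ℕ)
        have := i.2; omega
      right_inv := fun j => by ext; show (b + 1 + (j : ℕ)) - (b + 1) = (j : ℕ); omega } with hceC
  have himg : (univ.filter fun g : γ ≃ Fin n =>
      (∀ b ∈ B, g b < g x) ∧ ∀ c ∈ C, g x < g c) = Finset.univ.image decode := by
    ext g
    simp only [Finset.mem_filter, Finset.mem_univ, true_and, Finset.mem_image]
    constructor
    · rintro ⟨hgB, hgC⟩
      have hgx : (g x : ℕ) = b := hrk g hgB hgC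
      have hmemB : ∀ y : γ, y ∈ B ↔ ((g y : ℕ) < b) := by
        intro y
        constructor
        · intro hy; have := hgB y hy; rw [Fin.lt_def] at this; omega
        · intro hy
          rcases hcov y with rfl | h1 | h1
          · omega
          · exact h1
          · have := hgC y h1; rw [Fin.lt_def] at this; omega
      have hmemC : ∀ y : γ, y ∈ C ↔ (b < (g y : ℕ)) := by
        intro y
        constructor
        · intro hy; have := hgC y hy; rw [Fin.lt_def] at this; omega
        · intro hy
          rcases hcov y with rfl | h1 | h1
          · omega
          · have := hgB y h1; rw [Fin.lt_def] at this; omega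
          · exact h1
      refine ⟨⟨(g.subtypeEquiv hmemB).trans ceB, (g.subtypeEquiv hmemC).trans ceC⟩, ?_⟩
      apply Equiv.ext; intro y
      apply Fin.ext
      rw [hdecval]
      rcases hcov y with rfl | h1 | h1
      · rw [hFxval]; omega
      · rw [hFBval _ y h1]; rfl
      · rw [hFCval _ y h1]
        show b + 1 + ((g y : ℕ) - (b + 1)) = (g y : ℕ)
        have := (hmemC y).mp h1; omega
    · rintro ⟨p, rfl⟩
      constructor
      · intro y hy
        rw [Fin.lt_def, hdecval, hdecval, hFBval p y hy, hFxval]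
        exact (p.1 ⟨y, hy⟩).isLt
      · intro y hy
        rw [Fin.lt_def, hdecval, hdecval, hFCval p y hy, hFxval]
        omega
  have hinj : Function.Injective decode := by
    intro p q hpq
    have hval : ∀ y, (F p y : ℕ) = (F q y : ℕ) := by
      intro y; rw [← hdecval, ← hdecval, hpq]
    refine Prod.ext ?_ ?_
    · apply Equiv.ext; intro y
      apply Fin.ext
      have := hval y.1
      rw [hFBval p y.1 y.2, hFBval q y.1 y.2] at this
      exact this
    · apply Equiv.ext; intro y
      apply Fin.ext
      have h0 := hval y.1
      rw [hFCval p y.1 y.2, hFCval q y.1 y.2] at h0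
      have h1 : (p.2 ⟨y.1, y.2⟩ : ℕ) = (q.2 ⟨y.1, y.2⟩ : ℕ) := by omega
      exact h1
  rw [himg, Finset.card_image_of_injective _ hinj, Finset.card_univ, Fintype.card_prod,
    Fintype.card_equiv (Fintype.equivFinOfCardEq (by simp [hb])),
    Fintype.card_equiv (Fintype.equivFinOfCardEq (by simp [hc]))]
  simp [hb, hc]

end Counting

section General
variable {β : Type*} [DecidableEq β]

omit [DecidableEq β] in
lemma equiv_fin_eq_of_lt_iff' {a : ℕ} (u v : β ≃ Fin a)
    (h : ∀ y z, u y < u z ↔ v y < v z) : u = v := by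
  have hw : ∀ i j : Fin a, (u.symm.trans v) i < (u.symm.trans v) j ↔ i < j := by
    intro i j
    rw [Equiv.trans_apply, Equiv.trans_apply, ← h, Equiv.apply_symm_apply, Equiv.apply_symm_apply]
  have hle : ∀ i j : Fin a, (u.symm.trans v) i ≤ (u.symm.trans v) j ↔ i ≤ j := by
    intro i j
    rw [← not_lt, ← not_lt, hw]
  have h1 : (⟨u.symm.trans v, fun {i j} => hle i j⟩ : Fin a ≃o Fin a) = OrderIso.refl _ :=
    Subsingleton.elim _ _
  have h2 : u.symm.trans v = Equiv.refl _ :=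
    congrArg (fun o : Fin a ≃o Fin a => (o : Fin a ≃ Fin a)) h1
  refine Equiv.ext fun y => ?_
  have := congrFun (congrArg (fun e : Fin a ≃ Fin a => e.toFun) h2) (u y)
  simpa using this.symm

/-- The rank (relative order) of `g` restricted to `A`. -/
noncomputable def rnk {n : ℕ} (A : Finset β) (g : β ≃ Fin n) : {y // y ∈ A} ≃ Fin A.card :=
  (g.subtypeEquiv (fun y => ⟨fun h => Finset.mem_image_of_mem g h,
     fun h => by
       obtain ⟨z, hz, hzy⟩ := Finset.mem_image.mp h
       rwa [← g.injective hzy]⟩)).trans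
    ((A.image g).orderIsoOfFin
      (Finset.card_image_of_injective _ g.injective)).symm.toEquiv

lemma rnk_lt_iff {n : ℕ} (A : Finset β) (g : β ≃ Fin n) (y z : {y // y ∈ A}) :
    rnk A g y < rnk A g z ↔ g y.1 < g z.1 := by
  unfold rnk
  rw [Equiv.trans_apply, Equiv.trans_apply]
  simp only [RelIso.coe_fn_toEquiv]
  rw [OrderIso.lt_iff_lt]
  rfl

lemma rnk_extendDomain {n : ℕ} (A : Finset β) (g : β ≃ Fin n)
    (τ : Equiv.Perm {y // y ∈ A}) :
    rnk A (Equiv.trans (τ.extendDomain (Equiv.refl _)) g) = τ.trans (rnk A g) := by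
  apply equiv_fin_eq_of_lt_iff'
  intro y z
  rw [rnk_lt_iff]
  have hval : ∀ w : {y // y ∈ A},
      (Equiv.trans (τ.extendDomain (Equiv.refl _)) g) w.1 = g (τ w).1 := by
    intro w
    rw [Equiv.trans_apply]
    congr 1
    rw [Equiv.Perm.extendDomain_apply_subtype _ _ w.2]
    rfl
  rw [hval y, hval z, Equiv.trans_apply, Equiv.trans_apply, rnk_lt_iff]

variable [Fintype β]

lemma rnk_fiber_card_eq {n : ℕ} (A : Finset β) (g1 g2 : {y // y ∈ A} ≃ Fin A.card) :
    (univ.filter fun g : β ≃ Fin n => rnk A g = g1).card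
      = (univ.filter fun g : β ≃ Fin n => rnk A g = g2).card := by
  classical
  set τ : Equiv.Perm {y // y ∈ A} := g2.trans g1.symm with hτ
  set σ : Equiv.Perm β := τ.extendDomain (Equiv.refl _) with hσ
  set σ' : Equiv.Perm β := (τ⁻¹).extendDomain (Equiv.refl _) with hσ'
  have hσinv : σ' = σ⁻¹ := by rw [hσ', hσ, Equiv.Perm.extendDomain_inv]
  refine Finset.card_nbij' (fun g => Equiv.trans σ g) (fun g => Equiv.trans σ' g) ?_ ?_ ?_ ?_
  · intro g hg
    rw [Finset.mem_coe, Finset.mem_filter] at hg ⊢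
    refine ⟨Finset.mem_univ _, ?_⟩
    rw [rnk_extendDomain, hg.2]
    apply Equiv.ext; intro y
    rw [Equiv.trans_apply, hτ, Equiv.trans_apply, Equiv.apply_symm_apply]
  · intro g hg
    rw [Finset.mem_coe, Finset.mem_filter] at hg ⊢
    refine ⟨Finset.mem_univ _, ?_⟩
    have : (τ⁻¹ : Equiv.Perm {y // y ∈ A}) = g1.trans g2.symm := by
      apply Equiv.ext; intro y
      rw [hτ]
      rfl
    rw [rnk_extendDomain, hg.2, this]
    apply Equiv.ext; intro y
    rw [Equiv.trans_apply, Equiv.trans_apply, Equiv.apply_symm_apply]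
  · intro g _
    apply Equiv.ext; intro y
    rw [Equiv.trans_apply, Equiv.trans_apply, hσinv, Equiv.Perm.inv_def, Equiv.apply_symm_apply]
  · intro g _
    apply Equiv.ext; intro y
    rw [Equiv.trans_apply, Equiv.trans_apply, hσinv, Equiv.Perm.inv_def, Equiv.symm_apply_apply]

end General

section Main
variable {β : Type*} [DecidableEq β] [Fintype β]

lemma card_fav_mul (B C : Finset β) (x : β) (hxB : x ∉ B) (hxC : x ∉ C)
    (hBC : Disjoint B C) {n : ℕ} (hn : Fintype.card β = n) :
    (univ.filter fun g : β ≃ Fin n =>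
      (∀ b ∈ B, g b < g x) ∧ ∀ c ∈ C, g x < g c).card * (B.card + 1 + C.card).factorial
      = n.factorial * (B.card.factorial * C.card.factorial) := by
  classical
  set A := insert x (B ∪ C) with hA
  have hxA : x ∈ A := mem_insert_self _ _
  have hBA : ∀ y ∈ B, y ∈ A := fun y hy => by simp [hA, hy]
  have hCA : ∀ y ∈ C, y ∈ A := fun y hy => by simp [hA, hy]
  set x' : {y // y ∈ A} := ⟨x, hxA⟩ with hx'
  set B' : Finset {y // y ∈ A} := univ.filter (fun y => y.1 ∈ B) with hB'
  set C' : Finset {y // y ∈ A} := univ.filter (fun y => y.1 ∈ C) with hC'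
  have hB'card : B'.card = B.card := by
    refine Finset.card_nbij (fun y => y.1) ?_ ?_ ?_
    · intro y hy; simp only [hB', Finset.mem_coe, Finset.mem_filter] at hy; exact hy.2
    · intro y1 _ y2 _ h; exact Subtype.ext h
    · intro y hy
      rw [Finset.mem_coe] at hy
      exact ⟨⟨y, hBA y hy⟩, by simp [hB', hy], rfl⟩
  have hC'card : C'.card = C.card := by
    refine Finset.card_nbij (fun y => y.1) ?_ ?_ ?_
    · intro y hy; simp only [hC', Finset.mem_coe, Finset.mem_filter] at hy; exact hy.2
    · intro y1 _ y2 _ h; exact Subtype.ext h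
    · intro y hy
      rw [Finset.mem_coe] at hy
      exact ⟨⟨y, hCA y hy⟩, by simp [hC', hy], rfl⟩
  have hx'B' : x' ∉ B' := by simp [hB', hx', hxB]
  have hx'C' : x' ∉ C' := by simp [hC', hx', hxC]
  have hB'C' : Disjoint B' C' := by
    rw [Finset.disjoint_left]
    intro y hy1 hy2
    simp only [hB', hC', Finset.mem_filter] at hy1 hy2
    exact Finset.disjoint_left.mp hBC hy1.2 hy2.2
  have hcov : ∀ y : {y // y ∈ A}, y = x' ∨ y ∈ B' ∨ y ∈ C' := by
    intro y
    have h2 : (y : β) ∈ insert x (B ∪ C) := y.2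
    rw [Finset.mem_insert, Finset.mem_union] at h2
    rcases h2 with h | h | h
    · exact Or.inl (Subtype.ext h)
    · exact Or.inr (Or.inl (by simp [hB', h]))
    · exact Or.inr (Or.inr (by simp [hC', h]))
  have hγcard : Fintype.card {y // y ∈ A} = A.card := Fintype.card_coe A
  have hAcard : A.card = B.card + 1 + C.card := by
    rw [← hγcard, card_univ_partition B' C' x' hx'B' hx'C' hB'C' hcov, hB'card, hC'card]
  -- favorable transfer
  have htrans : ∀ g : β ≃ Fin n,
      ((∀ b ∈ B, g b < g x) ∧ ∀ c ∈ C, g x < g c) ↔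
      ((∀ y ∈ B', rnk A g y < rnk A g x') ∧ ∀ y ∈ C', rnk A g x' < rnk A g y) := by
    intro g
    constructor
    · rintro ⟨h1, h2⟩
      constructor
      · intro y hy
        simp only [hB', Finset.mem_filter] at hy
        exact (rnk_lt_iff A g y x').mpr (h1 y.1 hy.2)
      · intro y hy
        simp only [hC', Finset.mem_filter] at hy
        exact (rnk_lt_iff A g x' y).mpr (h2 y.1 hy.2)
    · rintro ⟨h1, h2⟩
      constructor
      · intro b hb
        exact (rnk_lt_iff A g ⟨b, hBA b hb⟩ x').mp
          (h1 ⟨b, hBA b hb⟩ (by simp [hB', hb]))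
      · intro c hc
        exact (rnk_lt_iff A g x' ⟨c, hCA c hc⟩).mp
          (h2 ⟨c, hCA c hc⟩ (by simp [hC', hc]))
  -- the common fiber size
  set e0 : {y // y ∈ A} ≃ Fin A.card := Fintype.equivFinOfCardEq hγcard with he0
  set K := (univ.filter fun g : β ≃ Fin n => rnk A g = e0).card with hK
  have h_total : n.factorial = A.card.factorial * K := by
    have h1 : (univ : Finset (β ≃ Fin n)).card
        = ∑ g' ∈ (univ : Finset ({y // y ∈ A} ≃ Fin A.card)),
            (univ.filter fun g : β ≃ Fin n => rnk A g = g').card :=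
      Finset.card_eq_sum_card_fiberwise (fun g _ => Finset.mem_univ _)
    rw [Finset.sum_congr rfl (fun g' _ => rnk_fiber_card_eq A g' e0), Finset.sum_const,
      smul_eq_mul, Finset.card_univ, Finset.card_univ, Fintype.card_equiv e0,
      Fintype.card_equiv (Fintype.equivFinOfCardEq hn), hγcard, hn] at h1
    exact h1
  have h_fav : (univ.filter fun g : β ≃ Fin n =>
      (∀ b ∈ B, g b < g x) ∧ ∀ c ∈ C, g x < g c).card
      = (B.card.factorial * C.card.factorial) * K := by
    have hre : (univ.filter fun g : β ≃ Fin n =>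
        (∀ b ∈ B, g b < g x) ∧ ∀ c ∈ C, g x < g c)
        = (univ.filter fun g : β ≃ Fin n =>
            (∀ y ∈ B', rnk A g y < rnk A g x') ∧ ∀ y ∈ C', rnk A g x' < rnk A g y) := by
      apply Finset.filter_congr
      intro g _
      exact htrans g
    rw [hre]
    have h1 : (univ.filter fun g : β ≃ Fin n =>
        (∀ y ∈ B', rnk A g y < rnk A g x') ∧ ∀ y ∈ C', rnk A g x' < rnk A g y).card
        = ∑ g' ∈ (univ.filter fun g' : {y // y ∈ A} ≃ Fin A.card =>
            (∀ y ∈ B', g' y < g' x') ∧ ∀ y ∈ C', g' x' < g' y),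
            ((univ.filter fun g : β ≃ Fin n =>
              (∀ y ∈ B', rnk A g y < rnk A g x') ∧ ∀ y ∈ C', rnk A g x' < rnk A g y).filter
                (fun g => rnk A g = g')).card := by
      apply Finset.card_eq_sum_card_fiberwise
      intro g hg
      rw [Finset.mem_coe, Finset.mem_filter] at hg ⊢
      exact ⟨Finset.mem_univ _, hg.2⟩
    rw [h1]
    have h2 : ∀ g' ∈ (univ.filter fun g' : {y // y ∈ A} ≃ Fin A.card =>
            (∀ y ∈ B', g' y < g' x') ∧ ∀ y ∈ C', g' x' < g' y),
        ((univ.filter fun g : β ≃ Fin n =>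
              (∀ y ∈ B', rnk A g y < rnk A g x') ∧ ∀ y ∈ C', rnk A g x' < rnk A g y).filter
                (fun g => rnk A g = g')).card = K := by
      intro g' hg'
      rw [Finset.mem_filter] at hg'
      have : ((univ.filter fun g : β ≃ Fin n =>
              (∀ y ∈ B', rnk A g y < rnk A g x') ∧ ∀ y ∈ C', rnk A g x' < rnk A g y).filter
                (fun g => rnk A g = g'))
          = (univ.filter fun g : β ≃ Fin n => rnk A g = g') := by
        ext g
        simp only [Finset.mem_filter, Finset.mem_univ, true_and]
        constructor
        · rintro ⟨_, h⟩; exact h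
        · intro h; exact ⟨by rw [h]; exact hg'.2, h⟩
      rw [this, hK]
      exact rnk_fiber_card_eq A g' e0
    rw [Finset.sum_congr rfl h2, Finset.sum_const, smul_eq_mul,
      card_fav_partition B' C' x' hx'B' hx'C' hB'C' hcov hγcard, hB'card, hC'card]
  rw [h_fav]
  have : (B.card + 1 + C.card).factorial = A.card.factorial := by rw [hAcard]
  rw [this]
  calc B.card.factorial * C.card.factorial * K * A.card.factorial
      = (A.card.factorial * K) * (B.card.factorial * C.card.factorial) := by ring
    _ = n.factorial * (B.card.factorial * C.card.factorial) := by rw [← h_total]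

end Main

section GraphLemmas
variable {V : Type*} [DecidableEq V]

lemma mem_prefixEdges {s : Finset (Sym2 V)} (ω : Fin s.card ≃ {e : Sym2 V // e ∈ s})
    (i : ℕ) (e : Sym2 V) :
    e ∈ prefixEdges ω i ↔ ∃ he : e ∈ s, ((ω.symm ⟨e, he⟩ : Fin s.card) : ℕ) < i := by
  unfold prefixEdges
  simp only [Finset.mem_image, Finset.mem_filter, Finset.mem_univ, true_and]
  constructor
  · rintro ⟨j, hj, rfl⟩
    refine ⟨(ω j).2, ?_⟩
    rw [show (⟨(ω j).1, (ω j).2⟩ : {e : Sym2 V // e ∈ s}) = ω j from rfl,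
      Equiv.symm_apply_apply]
    exact hj
  · rintro ⟨he, hlt⟩
    refine ⟨ω.symm ⟨e, he⟩, hlt, ?_⟩
    rw [Equiv.apply_symm_apply]

lemma prefixEdges_mono {s : Finset (Sym2 V)} (ω : Fin s.card ≃ {e : Sym2 V // e ∈ s})
    {i j : ℕ} (hij : i ≤ j) : prefixEdges ω i ⊆ prefixEdges ω j := by
  intro e he
  rw [mem_prefixEdges] at he ⊢
  obtain ⟨hes, hlt⟩ := he
  exact ⟨hes, lt_of_lt_of_le hlt hij⟩

lemma degIn_mono {s t : Finset (Sym2 V)} (hst : s ⊆ t) (v : V) :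
    degIn s v ≤ degIn t v :=
  Finset.card_le_card (Finset.filter_subset_filter _ hst)

lemma filter_edgeFinset_eq_incidenceFinset {V : Type*} [Fintype V] [DecidableEq V]
    (J : SimpleGraph V) [DecidableRel J.Adj] (v : V) :
    J.edgeFinset.filter (fun e => v ∈ e) = J.incidenceFinset v := by
  ext e
  rw [Finset.mem_filter, SimpleGraph.mem_incidenceFinset, SimpleGraph.mem_edgeFinset]
  exact Iff.rfl

lemma degIn_edgeFinset {V : Type*} [Fintype V] [DecidableEq V]
    (J : SimpleGraph V) [DecidableRel J.Adj] (v : V) :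
    degIn J.edgeFinset v = J.degree v := by
  rw [degIn, filter_edgeFinset_eq_incidenceFinset, SimpleGraph.card_incidenceFinset_eq_degree]

end GraphLemmas

lemma mem_incidenceFinset' {V : Type*} [Fintype V] [DecidableEq V]
    (J : SimpleGraph V) [DecidableRel J.Adj] (v : V) (e : Sym2 V) :
    e ∈ J.incidenceFinset v ↔ e ∈ J.edgeFinset ∧ v ∈ e := by
  rw [← filter_edgeFinset_eq_incidenceFinset, Finset.mem_filter]

lemma card_filter_val_mem {α : Type*} [DecidableEq α] (s B : Finset α) (hBs : B ⊆ s) :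
    ((Finset.univ : Finset {x // x ∈ s}).filter (fun y => y.1 ∈ B)).card = B.card := by
  refine Finset.card_nbij (fun y => y.1) ?_ ?_ ?_
  · intro y hy
    rw [Finset.mem_coe, Finset.mem_filter] at hy
    exact hy.2
  · intro y1 _ y2 _ hE
    exact Subtype.ext hE
  · intro y hy
    rw [Finset.mem_coe] at hy
    exact ⟨⟨y, hBs hy⟩, by simp [hy], rfl⟩


/-- Let `G` be a finite simple graph with minimum degree at least `δ ≥ 1`, let `J` be a
`δ`-regular spanning subgraph of `G` with `h` edges, and let `uv` be an edge of `J`;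
write `Δ(u) = deg_G(u) − δ`.  The probability that `J ⊆ G_ω`, `e_{k(ω)} = uv`, and `u` has
degree exactly `δ` in `G_ω` equals `(h−1)!·Δ(u)!/(h+Δ(u))!`, which in turn equals
`(1/h)·(1/C(h+Δ(u),h))`. -/
theorem probability_subgraph_last_edge_and_low_degree_endpoint
    {V : Type*} [Fintype V] [DecidableEq V]
    (G J : SimpleGraph V) [DecidableRel G.Adj] [DecidableRel J.Adj]
    (δ : ℕ) (hδ : 1 ≤ δ) (hGdeg : ∀ w : V, δ ≤ G.degree w)
    (hJG : J ≤ G) (hJ : J.IsRegularOfDegree δ)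
    (u v : V) (huv : J.Adj u v) (h : ℕ) (hh : h = J.edgeFinset.card) :
    ({ω : Fin G.edgeFinset.card ≃ {e : Sym2 V // e ∈ G.edgeFinset} |
        J.edgeSet ⊆ ↑(finalEdges δ ω) ∧ lastEdgeIs δ ω s(u, v) ∧
          degIn (finalEdges δ ω) u = δ}.ncard : ℝ) /
      (Fintype.card (Fin G.edgeFinset.card ≃ {e : Sym2 V // e ∈ G.edgeFinset}) : ℝ) =
    ((h - 1).factorial : ℝ) * ((G.degree u - δ).factorial : ℝ) /
      ((h + (G.degree u - δ)).factorial : ℝ) ∧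
    ((h - 1).factorial : ℝ) * ((G.degree u - δ).factorial : ℝ) /
        ((h + (G.degree u - δ)).factorial : ℝ) =
      (1 / (h : ℝ)) * (1 / (((h + (G.degree u - δ)).choose h : ℝ))) := by
  classical
  set s : Finset (Sym2 V) := G.edgeFinset with hs
  set m : ℕ := s.card with hm
  set x : Sym2 V := s(u, v) with hx
  set d : ℕ := G.degree u - δ with hd
  have hxJ : x ∈ J.edgeFinset := by
    rw [SimpleGraph.mem_edgeFinset, hx]; exact huv
  have hJs : J.edgeFinset ⊆ s := by
    intro e he
    rw [SimpleGraph.mem_edgeFinset] at he ⊢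
    exact SimpleGraph.edgeSet_mono hJG he
  have hxs : x ∈ s := hJs hxJ
  have hJIu : J.incidenceFinset u ⊆ G.incidenceFinset u := by
    intro e he
    rw [mem_incidenceFinset'] at he ⊢
    exact ⟨hJs he.1, he.2⟩
  have hGIs : G.incidenceFinset u ⊆ s := fun e he => (mem_incidenceFinset' G u e).mp he |>.1
  have hxJI : x ∈ J.incidenceFinset u :=
    (mem_incidenceFinset' J u x).mpr ⟨hxJ, by rw [hx]; exact Sym2.mem_mk_left u v⟩
  set B : Finset (Sym2 V) := J.edgeFinset.erase x with hB
  set C : Finset (Sym2 V) := G.incidenceFinset u \ J.incidenceFinset u with hC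
  have hBs : B ⊆ s := fun e he => hJs (Finset.mem_of_mem_erase he)
  have hCs : C ⊆ s := fun e he => hGIs (Finset.mem_sdiff.mp he).1
  have hJIcard : (J.incidenceFinset u).card = δ := by
    rw [SimpleGraph.card_incidenceFinset_eq_degree]; exact hJ u
  have hh1 : 1 ≤ h := by rw [hh]; exact Finset.card_pos.mpr ⟨x, hxJ⟩
  have hBcard : B.card = h - 1 := by rw [hB, Finset.card_erase_of_mem hxJ, hh]
  have hCcard : C.card = d := by
    rw [hC, Finset.card_sdiff_of_subset hJIu, SimpleGraph.card_incidenceFinset_eq_degree, hJIcard, hd]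
  have hxB : x ∉ B := Finset.notMem_erase _ _
  have hxC : x ∉ C := by rw [hC, Finset.mem_sdiff]; exact fun hc => hc.2 hxJI
  have hBCdis : Disjoint B C := by
    rw [Finset.disjoint_left]
    intro e heB heC
    have heJ : e ∈ J.edgeFinset := Finset.mem_of_mem_erase heB
    rw [hC, Finset.mem_sdiff] at heC
    exact heC.2 ((mem_incidenceFinset' J u e).mpr
      ⟨heJ, ((mem_incidenceFinset' G u e).mp heC.1).2⟩)
  -- subtype versions
  set xf : {e : Sym2 V // e ∈ s} := ⟨x, hxs⟩ with hxf
  set Bf : Finset {e : Sym2 V // e ∈ s} := Finset.univ.filter (fun e => e.1 ∈ B) with hBf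
  set Cf : Finset {e : Sym2 V // e ∈ s} := Finset.univ.filter (fun e => e.1 ∈ C) with hCf
  have hBfcard : Bf.card = B.card := card_filter_val_mem s B hBs
  have hCfcard : Cf.card = C.card := card_filter_val_mem s C hCs
  have hxfBf : xf ∉ Bf := by simp [hBf, hxf, hxB]
  have hxfCf : xf ∉ Cf := by simp [hCf, hxf, hxC]
  have hBfCf : Disjoint Bf Cf := by
    rw [Finset.disjoint_left]
    intro e he1 he2
    rw [hBf, Finset.mem_filter] at he1
    rw [hCf, Finset.mem_filter] at he2
    exact Finset.disjoint_left.mp hBCdis he1.2 he2.2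
  -- the event characterization
  have hiff : ∀ ω : Fin m ≃ {e : Sym2 V // e ∈ s},
      (J.edgeSet ⊆ ↑(finalEdges δ ω) ∧ lastEdgeIs δ ω x ∧ degIn (finalEdges δ ω) u = δ)
      ↔ ((∀ b ∈ Bf, ω.symm b < ω.symm xf) ∧ ∀ c ∈ Cf, ω.symm xf < ω.symm c) := by
    intro ω
    constructor
    · rintro ⟨hJsub, ⟨hx1, hx2⟩, hdeg⟩
      have hJfin : J.edgeFinset ⊆ finalEdges δ ω := by
        intro e he
        exact Finset.mem_coe.mp (hJsub (SimpleGraph.mem_edgeFinset.mp he))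
      rw [mem_prefixEdges] at hx1
      obtain ⟨hxs', hposx0⟩ := hx1
      have hposx : ((ω.symm xf : Fin m) : ℕ) < stopIndex δ ω := hposx0
      have hx2' : ¬ ((ω.symm xf : Fin m) : ℕ) < stopIndex δ ω - 1 := by
        intro hlt
        exact hx2 ((mem_prefixEdges ω _ x).mpr ⟨hxs, hlt⟩)
      have hk1 : stopIndex δ ω = ((ω.symm xf : Fin m) : ℕ) + 1 := by omega
      constructor
      · intro b hbf
        rw [hBf, Finset.mem_filter] at hbf
        have hbJ : b.1 ∈ J.edgeFinset := Finset.mem_of_mem_erase hbf.2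
        have hbfin : b.1 ∈ finalEdges δ ω := hJfin hbJ
        rw [finalEdges, mem_prefixEdges] at hbfin
        obtain ⟨hbs, hblt0⟩ := hbfin
        have hblt : ((ω.symm b : Fin m) : ℕ) < stopIndex δ ω := hblt0
        have hne : ω.symm b ≠ ω.symm xf := by
          intro hE
          have hbx : b = xf := ω.symm.injective hE
          rw [hxf] at hbx
          apply hxB
          rw [← show b.1 = x from congrArg Subtype.val hbx]
          exact hbf.2
        rw [Fin.lt_def]
        have hvne : ((ω.symm b : Fin m) : ℕ) ≠ ((ω.symm xf : Fin m) : ℕ) :=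
          fun hE => hne (Fin.ext hE)
        omega
      · intro c hcf
        rw [hCf, Finset.mem_filter] at hcf
        have hcC := hcf.2
        rw [hC, Finset.mem_sdiff] at hcC
        have hcu : u ∈ c.1 := ((mem_incidenceFinset' G u c.1).mp hcC.1).2
        by_contra hcon
        push_neg at hcon
        have hclt : ((ω.symm c : Fin m) : ℕ) < stopIndex δ ω := by
          have := Fin.le_def.mp hcon
          omega
        have hcfin : c.1 ∈ finalEdges δ ω := by
          rw [finalEdges, mem_prefixEdges]
          exact ⟨c.2, hclt⟩
        have hsub : insert c.1 (J.incidenceFinset u) ⊆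
            (finalEdges δ ω).filter (fun e => u ∈ e) := by
          intro e he
          rw [Finset.mem_insert] at he
          rw [Finset.mem_filter]
          rcases he with rfl | he
          · exact ⟨hcfin, hcu⟩
          · have := (mem_incidenceFinset' J u e).mp he
            exact ⟨hJfin this.1, this.2⟩
        have hcnotJI : c.1 ∉ J.incidenceFinset u := hcC.2
        have hcard := Finset.card_le_card hsub
        rw [Finset.card_insert_of_notMem hcnotJI, hJIcard] at hcard
        rw [degIn] at hdeg
        omega
    · rintro ⟨hBlt, hClt⟩
      have hJsub' : J.edgeFinset ⊆ prefixEdges ω (((ω.symm xf : Fin m) : ℕ) + 1) := by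
        intro e he
        rw [mem_prefixEdges]
        refine ⟨hJs he, ?_⟩
        by_cases hne : e = x
        · have h1 : (⟨e, hJs he⟩ : {e : Sym2 V // e ∈ s}) = xf := Subtype.ext hne
          rw [h1]
          omega
        · have hBmem : (⟨e, hJs he⟩ : {e : Sym2 V // e ∈ s}) ∈ Bf := by
            rw [hBf, Finset.mem_filter]
            exact ⟨Finset.mem_univ _, Finset.mem_erase.mpr ⟨hne, he⟩⟩
          have := Fin.lt_def.mp (hBlt _ hBmem)
          omega
      have hmemS : (((ω.symm xf : Fin m) : ℕ) + 1) ∈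
          {i | ∀ w : V, δ ≤ degIn (prefixEdges ω i) w} := by
        intro w
        calc δ = J.degree w := (hJ w).symm
          _ = degIn J.edgeFinset w := (degIn_edgeFinset J w).symm
          _ ≤ _ := degIn_mono hJsub' w
      have hkstop : stopIndex δ ω = ((ω.symm xf : Fin m) : ℕ) + 1 := by
        refine le_antisymm (Nat.sInf_le hmemS) ?_
        refine le_csInf ⟨_, hmemS⟩ ?_
        intro i hiS
        by_contra hcon
        push_neg at hcon
        have hile : i ≤ ((ω.symm xf : Fin m) : ℕ) := by omega
        have hsub2 : (prefixEdges ω i).filter (fun e => u ∈ e) ⊆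
            (J.incidenceFinset u).erase x := by
          intro e he
          rw [Finset.mem_filter] at he
          obtain ⟨heP, hue⟩ := he
          rw [mem_prefixEdges] at heP
          obtain ⟨hes, hlt⟩ := heP
          have hnex : e ≠ x := by
            intro hE
            have h1 : (⟨e, hes⟩ : {e : Sym2 V // e ∈ s}) = xf := Subtype.ext hE
            rw [h1] at hlt
            omega
          have heGI : e ∈ G.incidenceFinset u := (mem_incidenceFinset' G u e).mpr ⟨hes, hue⟩
          have heJI : e ∈ J.incidenceFinset u := by
            by_contra hnJ
            have heC : e ∈ C := by rw [hC, Finset.mem_sdiff]; exact ⟨heGI, hnJ⟩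
            have hCmem : (⟨e, hes⟩ : {e : Sym2 V // e ∈ s}) ∈ Cf := by
              rw [hCf, Finset.mem_filter]
              exact ⟨Finset.mem_univ _, heC⟩
            have := Fin.lt_def.mp (hClt _ hCmem)
            omega
          exact Finset.mem_erase.mpr ⟨hnex, heJI⟩
        have hcard := Finset.card_le_card hsub2
        rw [Finset.card_erase_of_mem hxJI, hJIcard] at hcard
        have := hiS u
        rw [degIn] at this
        omega
      refine ⟨?_, ⟨?_, ?_⟩, ?_⟩
      · intro e he
        rw [Finset.mem_coe, finalEdges, hkstop]
        exact hJsub' (SimpleGraph.mem_edgeFinset.mpr he)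
      · rw [mem_prefixEdges]
        exact ⟨hxs, by rw [hkstop]; exact Nat.lt_succ_self _⟩
      · intro hmem
        rw [mem_prefixEdges] at hmem
        obtain ⟨he, hlt⟩ := hmem
        have hlt' : ((ω.symm xf : Fin m) : ℕ) < stopIndex δ ω - 1 := hlt
        omega
      · have hfe : (finalEdges δ ω).filter (fun e => u ∈ e) = J.incidenceFinset u := by
          apply Finset.Subset.antisymm
          · intro e he
            rw [Finset.mem_filter] at he
            obtain ⟨heP, hue⟩ := he
            rw [finalEdges, mem_prefixEdges] at heP
            obtain ⟨hes, hlt⟩ := heP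
            rw [hkstop] at hlt
            have heGI : e ∈ G.incidenceFinset u := (mem_incidenceFinset' G u e).mpr ⟨hes, hue⟩
            by_contra hnJ
            have heC : e ∈ C := by
              rw [hC, Finset.mem_sdiff]
              exact ⟨heGI, hnJ⟩
            have hCmem : (⟨e, hes⟩ : {e : Sym2 V // e ∈ s}) ∈ Cf := by
              rw [hCf, Finset.mem_filter]
              exact ⟨Finset.mem_univ _, heC⟩
            have := Fin.lt_def.mp (hClt _ hCmem)
            omega
          · intro e he
            have hme := (mem_incidenceFinset' J u e).mp he
            rw [Finset.mem_filter, finalEdges, hkstop]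
            exact ⟨hJsub' hme.1, hme.2⟩
        rw [degIn, hfe, hJIcard]
  -- counting
  have hcardβ : Fintype.card {e : Sym2 V // e ∈ s} = m := Fintype.card_coe s
  have hcount := card_fav_mul Bf Cf xf hxfBf hxfCf hBfCf hcardβ
  set N := (Finset.univ.filter fun g : {e : Sym2 V // e ∈ s} ≃ Fin m =>
      (∀ b ∈ Bf, g b < g xf) ∧ ∀ c ∈ Cf, g xf < g c).card with hN
  have hsetcount :
      ({ω : Fin m ≃ {e : Sym2 V // e ∈ s} |
        J.edgeSet ⊆ ↑(finalEdges δ ω) ∧ lastEdgeIs δ ω x ∧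
          degIn (finalEdges δ ω) u = δ}).ncard = N := by
    have hset1 : {ω : Fin m ≃ {e : Sym2 V // e ∈ s} |
        J.edgeSet ⊆ ↑(finalEdges δ ω) ∧ lastEdgeIs δ ω x ∧
          degIn (finalEdges δ ω) u = δ}
        = ↑(Finset.univ.filter (fun ω : Fin m ≃ {e : Sym2 V // e ∈ s} =>
            J.edgeSet ⊆ ↑(finalEdges δ ω) ∧ lastEdgeIs δ ω x ∧
              degIn (finalEdges δ ω) u = δ)) := by
      ext ω; simp
    rw [hset1, Set.ncard_coe_finset, hN]
    refine Finset.card_nbij' (fun ω => ω.symm) (fun g => g.symm) ?_ ?_ ?_ ?_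
    · intro ω hω
      rw [Finset.mem_coe, Finset.mem_filter] at hω ⊢
      exact ⟨Finset.mem_univ _, (hiff ω).mp hω.2⟩
    · intro g hg
      rw [Finset.mem_coe, Finset.mem_filter] at hg ⊢
      refine ⟨Finset.mem_univ _, (hiff g.symm).mpr ?_⟩
      rw [Equiv.symm_symm]
      exact hg.2
    · intro ω _; exact Equiv.symm_symm ω
    · intro g _; exact Equiv.symm_symm g
  rw [hBfcard, hBcard, hCfcard, hCcard] at hcount
  have hsum : (h - 1) + 1 + d = h + d := by omega
  rw [hsum] at hcount
  -- hcount : N * (h + d)! = m! * ((h-1)! * d!)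
  have hdenom : Fintype.card (Fin m ≃ {e : Sym2 V // e ∈ s}) = m.factorial := by
    rw [Fintype.card_equiv (Fintype.equivFinOfCardEq hcardβ).symm, Fintype.card_fin]
  have hfacpos : ∀ k : ℕ, (0:ℝ) < (k.factorial : ℝ) := by
    intro k; exact_mod_cast k.factorial_pos
  constructor
  · rw [hsetcount, hdenom, div_eq_div_iff (ne_of_gt (hfacpos m)) (ne_of_gt (hfacpos (h + d)))]
    have hc := congrArg (fun t : ℕ => (t : ℝ)) hcount
    push_cast at hc
    linear_combination hc
  · have hch := Nat.choose_mul_factorial_mul_factorial (Nat.le_add_right h d)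
    simp only [Nat.add_sub_cancel_left] at hch
    -- hch : (h+d).choose h * h! * d! = (h+d)!
    have hfac : h * (h - 1).factorial = h.factorial := Nat.mul_factorial_pred (by omega)
    have hchpos : 0 < (h + d).choose h := Nat.choose_pos (Nat.le_add_right h d)
    set ch := (h + d).choose h with hchdef
    have hh0 : (h : ℝ) ≠ 0 := Nat.cast_ne_zero.mpr (by omega)
    have hch0 : (ch : ℝ) ≠ 0 := Nat.cast_ne_zero.mpr hchpos.ne'
    rw [one_div_mul_one_div,
      div_eq_div_iff (ne_of_gt (hfacpos (h + d))) (mul_ne_zero hh0 hch0)]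
    have hnat : (h - 1).factorial * d.factorial * (h * ch) = (h + d).factorial := by
      calc (h - 1).factorial * d.factorial * (h * ch)
          = ch * (h * (h - 1).factorial) * d.factorial := by ring
        _ = ch * h.factorial * d.factorial := by rw [hfac]
        _ = (h + d).factorial := hch
    have hc2 := congrArg (fun t : ℕ => (t : ℝ)) hnat
    push_cast at hc2
    linear_combination hc2
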